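/- Let F be a finite field with q elements and let A, B be non-scalar diagonal matrices in GL(n, q), n ≥ 2. Then the product of conjugacy classes A^G · B^G in G = GL(n, q) is a union of at least q distinct conjugacy classes. -/

import Mathlib

open Pointwise Matrix

section helpers
variable {F : Type*} [Field F] {n : ℕ}

private lemma std_mul_diag (i j : Fin n) (d : Fin n → F) :
    single i j (1:F) * diagonal d = d j • single i j 1 := by
  ext a b
  rw [Matrix.mul_diagonal]
  by_cases hb : b = j <;> simp [single, hb] <;> aesop

private lemma diag_mul_std (i j : Fin n) (d : Fin n → F) :
    diagonal d * single i j (1:F) = d i • single i j 1 := by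
  ext a b
  rw [Matrix.diagonal_mul]
  by_cases ha : a = i <;> simp [single, ha] <;> aesop

omit [Field F] in
private lemma nonconst_pair (f g : Fin n → F)
    (hf : ∃ i j, f i ≠ f j) (hg : ∃ i j, g i ≠ g j) :
    ∃ i j, f i ≠ f j ∧ g i ≠ g j := by
  by_contra h
  push_neg at h
  obtain ⟨i, j, hij⟩ := hf
  obtain ⟨k, l, hkl⟩ := hg
  have hfkl : f k = f l := by
    by_contra hne
    exact hkl (h k l hne)
  by_cases h1 : f k = f i
  · have h2 : f k ≠ f j := h1 ▸ hij
    have h3 : f l ≠ f j := hfkl ▸ h2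
    exact hkl (by rw [h k j h2, h l j h3])
  · have h3 : f l ≠ f i := hfkl ▸ h1
    exact hkl (by rw [h k i h1, h l i h3])

private lemma nonconst_of_nonscalar (hn : 2 ≤ n) (d : Fin n → F)
    (h : ¬ ∃ lam : F, (diagonal d : Matrix (Fin n) (Fin n) F) = lam • 1) :
    ∃ i j, d i ≠ d j := by
  by_contra hc
  push_neg at hc
  refine h ⟨d ⟨0, by omega⟩, ?_⟩
  ext a b
  by_cases hab : a = b
  · subst hab
    simp [one_apply, hc a ⟨0, by omega⟩]
  · simp [one_apply, hab]

private lemma gl_trace_conj {n : ℕ} (c M : Matrix.GeneralLinearGroup (Fin n) F) :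
    Matrix.trace ((c * M * c⁻¹ : Matrix.GeneralLinearGroup (Fin n) F)
      : Matrix (Fin n) (Fin n) F)
    = Matrix.trace ((M : Matrix.GeneralLinearGroup (Fin n) F) : Matrix (Fin n) (Fin n) F) := by
  rw [Units.val_mul, Matrix.trace_mul_comm, ← Units.val_mul, inv_mul_cancel_left]

end helpers

theorem stmt_12 (F : Type*) [Field F] [Fintype F] (n : ℕ) (hn : 2 ≤ n)
    (A B : Matrix.GeneralLinearGroup (Fin n) F)
    (dA dB : Fin n → F)
    (hA : (A : Matrix (Fin n) (Fin n) F) = Matrix.diagonal dA)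
    (hB : (B : Matrix (Fin n) (Fin n) F) = Matrix.diagonal dB)
    (hAns : ¬ ∃ lam : F, (A : Matrix (Fin n) (Fin n) F) = lam • (1 : Matrix (Fin n) (Fin n) F))
    (hBns : ¬ ∃ lam : F, (B : Matrix (Fin n) (Fin n) F) = lam • (1 : Matrix (Fin n) (Fin n) F)) :
    Fintype.card F ≤ Set.ncard
      (ConjClasses.mk '' ({X | IsConj A X} * {X | IsConj B X})) := by
  classical
  obtain ⟨i, j, hAij, hBij⟩ :=
    nonconst_pair dA dB
      (nonconst_of_nonscalar hn dA (hA ▸ hAns)) (nonconst_of_nonscalar hn dB (hB ▸ hBns))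
  have hij : i ≠ j := fun h => hAij (h ▸ rfl)
  set E : Matrix (Fin n) (Fin n) F := single i j 1 with hE
  set E' : Matrix (Fin n) (Fin n) F := single j i 1 with hE'
  have hEE : E * E = 0 := single_mul_single_of_ne (h := Ne.symm hij) ..
  have hEE2 : single i j (1:F) * single i j 1 = 0 :=
    single_mul_single_of_ne (h := Ne.symm hij) ..
  have hE'E'2 : single j i (1:F) * single j i 1 = 0 :=
    single_mul_single_of_ne (h := hij) ..
  have hE'E' : E' * E' = 0 := single_mul_single_of_ne (h := hij) ..
  have hEE' : E * E' = single i i (1 * 1 : F) := single_mul_single_same ..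
  have hu : ∀ t : F, (1 + t • E) * (1 - t • E) = 1 ∧ (1 - t • E) * (1 + t • E) = 1 := by
    intro t
    constructor <;>
      · simp only [mul_sub, sub_mul, add_mul, mul_add, one_mul, mul_one,
          smul_mul_assoc, mul_smul_comm, hEE, smul_zero, sub_zero, add_zero, zero_add]
        module
  have hv : (1 + E') * (1 - E') = 1 ∧ (1 - E') * (1 + E') = 1 := by
    constructor <;>
      · simp only [mul_sub, sub_mul, add_mul, mul_add, one_mul, mul_one, hE'E',
          sub_zero, add_zero, zero_add]
        module
  let u : F → Matrix.GeneralLinearGroup (Fin n) F :=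
    fun t => ⟨1 + t • E, 1 - t • E, (hu t).1, (hu t).2⟩
  let v : Matrix.GeneralLinearGroup (Fin n) F := ⟨1 + E', 1 - E', hv.1, hv.2⟩
  let f : F → Matrix.GeneralLinearGroup (Fin n) F :=
    fun t => (u t * A * (u t)⁻¹) * (v * B * v⁻¹)
  have hmem : ∀ t, f t ∈ ({X | IsConj A X} * {X | IsConj B X}) := fun t =>
    Set.mul_mem_mul (isConj_iff.mpr ⟨u t, rfl⟩) (isConj_iff.mpr ⟨v, rfl⟩)
  have hXval : ∀ t : F, ((u t * A * (u t)⁻¹ : Matrix.GeneralLinearGroup (Fin n) F)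
        : Matrix (Fin n) (Fin n) F)
      = diagonal dA + (t * (dA j - dA i)) • E := by
    intro t
    have h1 : ((u t)⁻¹ : Matrix.GeneralLinearGroup (Fin n) F).val = 1 - t • E := rfl
    rw [Units.val_mul, Units.val_mul, h1, hA]
    show (1 + t • E) * diagonal dA * (1 - t • E) = _
    simp only [hE, add_mul, one_mul, mul_sub, mul_one, sub_mul, smul_mul_assoc,
      mul_smul_comm, std_mul_diag, diag_mul_std, smul_smul, hEE2, smul_zero,
      mul_zero, zero_mul, sub_zero]
    module
  have hYval : ((v * B * v⁻¹ : Matrix.GeneralLinearGroup (Fin n) F)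
        : Matrix (Fin n) (Fin n) F)
      = diagonal dB + (dB i - dB j) • E' := by
    have h1 : (v⁻¹ : Matrix.GeneralLinearGroup (Fin n) F).val = 1 - E' := rfl
    rw [Units.val_mul, Units.val_mul, h1, hB]
    show (1 + E') * diagonal dB * (1 - E') = _
    simp only [hE', add_mul, one_mul, mul_sub, mul_one, sub_mul, smul_mul_assoc,
      mul_smul_comm, std_mul_diag, diag_mul_std, smul_smul, hE'E'2, smul_zero,
      mul_zero, zero_mul, sub_zero]
    module
  have htrace : ∀ t : F, Matrix.trace ((f t : Matrix.GeneralLinearGroup (Fin n) F)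
        : Matrix (Fin n) (Fin n) F)
      = Matrix.trace (diagonal dA * diagonal dB)
        + t * ((dA j - dA i) * (dB i - dB j)) := by
    intro t
    have hval : ((f t : Matrix.GeneralLinearGroup (Fin n) F) : Matrix (Fin n) (Fin n) F)
        = (diagonal dA + (t * (dA j - dA i)) • E) * (diagonal dB + (dB i - dB j) • E') := by
      rw [show ((f t : Matrix.GeneralLinearGroup (Fin n) F) : Matrix (Fin n) (Fin n) F)
          = ((u t * A * (u t)⁻¹ : Matrix.GeneralLinearGroup (Fin n) F)
              : Matrix (Fin n) (Fin n) F)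
            * ((v * B * v⁻¹ : Matrix.GeneralLinearGroup (Fin n) F)
              : Matrix (Fin n) (Fin n) F) from Units.val_mul _ _,
        hXval, hYval]
    rw [hval, mul_add, add_mul, add_mul, mul_smul_comm, smul_mul_assoc, smul_mul_assoc,
      mul_smul_comm, hEE', diag_mul_std, std_mul_diag, smul_smul, smul_smul]
    simp only [Matrix.trace_add, Matrix.trace_smul,
      trace_single_eq_of_ne _ _ _ hij, trace_single_eq_of_ne _ _ _ (Ne.symm hij),
      trace_single_eq_same, smul_eq_mul]
    ring
  have hslope : (dA j - dA i) * (dB i - dB j) ≠ 0 :=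
    mul_ne_zero (sub_ne_zero.2 (Ne.symm hAij)) (sub_ne_zero.2 hBij)
  have hinj : Function.Injective (fun t => ConjClasses.mk (f t)) := by
    intro s t hst
    obtain ⟨c, hc⟩ := isConj_iff.mp (ConjClasses.mk_eq_mk_iff_isConj.mp hst)
    have htr : Matrix.trace ((f s : Matrix.GeneralLinearGroup (Fin n) F)
          : Matrix (Fin n) (Fin n) F)
        = Matrix.trace ((f t : Matrix.GeneralLinearGroup (Fin n) F)
          : Matrix (Fin n) (Fin n) F) := by
      rw [← hc, gl_trace_conj]
    rw [htrace, htrace] at htr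
    have h3 : s * ((dA j - dA i) * (dB i - dB j)) = t * ((dA j - dA i) * (dB i - dB j)) := by
      linear_combination htr
    exact mul_right_cancel₀ hslope h3
  have hsub : Set.range (fun t => ConjClasses.mk (f t))
      ⊆ ConjClasses.mk '' ({X | IsConj A X} * {X | IsConj B X}) := by
    rintro _ ⟨t, rfl⟩
    exact ⟨f t, hmem t, rfl⟩
  calc Fintype.card F = (Set.range fun t => ConjClasses.mk (f t)).ncard := by
        rw [← Set.image_univ, Set.ncard_image_of_injective _ hinj, Set.ncard_univ,
          Nat.card_eq_fintype_card]
    _ ≤ _ := Set.ncard_le_ncard hsub (Set.toFinite _)
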